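/- Let f be an entire function and C > 0 a constant such that M_1(f,r) ≤ C·e^r/√r for all r > 0, where M_1(f,r) = (1/2π)∫₀^{2π}|f(re^{it})|dt. Then for every m ∈ ℕ, the sequence (sup_{|z|≤m} |f^{(n)}(z)|)_{n≥1} is bounded. -/

import Mathlib

open Filter Metric

/-- The integral 1-mean of `f` on the circle of radius `r`. -/
noncomputable def M1 (f : ℂ → ℂ) (r : ℝ) : ℝ :=
  (1 / (2 * Real.pi)) * ∫ t in (0:ℝ)..(2 * Real.pi), ‖f (r * Complex.exp (t * Complex.I))‖

/-- The sup of `‖f‖` over the closed ball of radius `m` centered at `0`. -/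
noncomputable def supD (f : ℂ → ℂ) (m : ℝ) : ℝ :=
  sSup ((fun z => ‖f z‖) '' Metric.closedBall (0:ℂ) m)

open scoped NNReal

lemma M1_nonneg (f : ℂ → ℂ) (r : ℝ) : 0 ≤ M1 f r := by
  apply mul_nonneg (by positivity)
  exact intervalIntegral.integral_nonneg Real.two_pi_pos.le fun _ _ => norm_nonneg _

/-- Cauchy coefficient bound in terms of the integral mean. -/
lemma norm_cauchyPowerSeries_le_M1 (f : ℂ → ℂ) (R : ℝ) (hR : 0 < R) (j : ℕ) :
    ‖cauchyPowerSeries f 0 R j‖ ≤ M1 f R / R ^ j := by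
  have h := norm_cauchyPowerSeries_le f 0 R j
  have hM : M1 f R = (2 * Real.pi)⁻¹ * ∫ θ in (0:ℝ)..(2 * Real.pi), ‖f (circleMap 0 R θ)‖ := by
    simp [M1, circleMap, one_div]
  rw [hM]
  calc ‖cauchyPowerSeries f 0 R j‖
      ≤ ((2 * Real.pi)⁻¹ * ∫ θ in (0:ℝ)..(2 * Real.pi), ‖f (circleMap 0 R θ)‖) * |R|⁻¹ ^ j := h
    _ = ((2 * Real.pi)⁻¹ * ∫ θ in (0:ℝ)..(2 * Real.pi), ‖f (circleMap 0 R θ)‖) / R ^ j := by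
        rw [abs_of_pos hR, inv_pow, div_eq_mul_inv]

/-- Stirling-type bound: `n! ≤ e √n (n/e)^n` for `n ≥ 1`. -/
lemma factorial_le_stirling (n : ℕ) (hn : 1 ≤ n) :
    (Nat.factorial n : ℝ) ≤ Real.exp 1 * Real.sqrt n * ((n : ℝ) / Real.exp 1) ^ n := by
  have hnpos : (0:ℝ) < n := by exact_mod_cast hn
  have hden : (0:ℝ) < Real.sqrt (2 * n) * ((n : ℝ) / Real.exp 1) ^ n := by positivity
  have hseq : Stirling.stirlingSeq n ≤ Stirling.stirlingSeq 1 := by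
    obtain ⟨k, rfl⟩ := Nat.exists_eq_add_of_le hn
    have h := Stirling.log_stirlingSeq'_antitone (Nat.zero_le k)
    simp only [Function.comp] at h
    have hpos1 : 0 < Stirling.stirlingSeq (Nat.succ 0) := by
      rw [Stirling.stirlingSeq_one]; positivity
    have hposk : 0 < Stirling.stirlingSeq (Nat.succ k) := by
      unfold Stirling.stirlingSeq
      have : (0:ℝ) < (Nat.succ k) := by exact_mod_cast Nat.succ_pos k
      positivity
    have := (Real.log_le_log_iff hposk hpos1).1 h
    simpa [Nat.succ_eq_add_one, add_comm] using this
  rw [Stirling.stirlingSeq_one] at hseq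
  have hdef : (Nat.factorial n : ℝ) = Stirling.stirlingSeq n * (Real.sqrt (2 * n) * ((n : ℝ) / Real.exp 1) ^ n) := by
    unfold Stirling.stirlingSeq
    field_simp
  rw [hdef]
  have h2n : Real.sqrt (2 * n) = Real.sqrt 2 * Real.sqrt n := Real.sqrt_mul (by norm_num) _
  calc Stirling.stirlingSeq n * (Real.sqrt (2 * n) * ((n : ℝ) / Real.exp 1) ^ n)
      ≤ (Real.exp 1 / Real.sqrt 2) * (Real.sqrt (2 * n) * ((n : ℝ) / Real.exp 1) ^ n) :=
        mul_le_mul_of_nonneg_right hseq hden.le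
    _ = Real.exp 1 * Real.sqrt n * ((n : ℝ) / Real.exp 1) ^ n := by
        rw [h2n]
        have h2 : Real.sqrt 2 ≠ 0 := by positivity
        field_simp

/-- Main Cauchy-type estimate for iterated derivatives off-center. -/
lemma norm_iteratedDeriv_le (f : ℂ → ℂ) (hf : Differentiable ℂ f) (n : ℕ) (R : ℝ≥0)
    (hR : 0 < R) (z : ℂ) (hz : ‖z‖ < R) :
    ‖iteratedDeriv n f z‖ ≤ (Nat.factorial n : ℝ) * (M1 f R * R / (R - ‖z‖) ^ (n + 1)) := by
  have hRpos : (0:ℝ) < R := hR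
  set p := cauchyPowerSeries f 0 (R:ℝ) with hp
  have hps : HasFPowerSeriesOnBall f p 0 ⊤ := hf.hasFPowerSeriesOnBall 0 hR
  have hrad : p.radius = ⊤ := top_le_iff.1 hps.r_le
  set A := M1 f R with hA
  have hA0 : 0 ≤ A := M1_nonneg f R
  have hcoef : ∀ j, ‖p j‖ ≤ A / (R:ℝ) ^ j := fun j => norm_cauchyPowerSeries_le_M1 f R hRpos j
  set q := p.changeOrigin z with hq
  have hzrad : (‖z‖₊ : ENNReal) < p.radius := by rw [hrad]; exact ENNReal.coe_lt_top
  have hball : HasFPowerSeriesOnBall f q (0 + z) (⊤ - ‖z‖₊) :=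
    hps.changeOrigin (ENNReal.coe_lt_top)
  rw [zero_add] at hball
  -- identity for the iterated derivative
  have hder : iteratedDeriv n f z = Nat.factorial n • (q n fun _ => (1:ℂ)) := by
    rw [iteratedDeriv_eq_iteratedFDeriv, ← hball.factorial_smul (1:ℂ) n]
  have hnorm1 : ‖iteratedDeriv n f z‖ = (Nat.factorial n : ℝ) * ‖q n fun _ => (1:ℂ)‖ := by
    rw [hder, ← Nat.cast_smul_eq_nsmul ℝ, norm_smul]
    simp
  have happ : ‖q n fun _ => (1:ℂ)‖ ≤ ‖q n‖ := by
    have := (q n).le_opNorm fun _ => (1:ℂ)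
    simpa using this
  -- bound on ‖q n‖ via changeOrigin
  have hsum : Summable fun s : Σ l : ℕ, { t : Finset (Fin (n + l)) // t.card = l } =>
      ‖p (n + s.1)‖₊ * ‖z‖₊ ^ s.1 := p.changeOriginSeries_summable_aux₂ hzrad n
  have h1 : ‖q n‖₊ ≤ ∑' s : Σ l : ℕ, { t : Finset (Fin (n + l)) // t.card = l },
      ‖p (n + s.1)‖₊ * ‖z‖₊ ^ s.1 := p.nnnorm_changeOrigin_le n hzrad
  have h1' : ‖q n‖ ≤ ∑' s : Σ l : ℕ, { t : Finset (Fin (n + l)) // t.card = l },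
      (‖p (n + s.1)‖ * ‖z‖ ^ s.1) := by
    have := NNReal.coe_le_coe.2 h1
    rwa [NNReal.coe_tsum] at this
  -- re-express the sigma sum as a sum over l
  have hsumR : Summable fun s : Σ l : ℕ, { t : Finset (Fin (n + l)) // t.card = l } =>
      (‖p (n + s.1)‖ * ‖z‖ ^ s.1) := by
    have := NNReal.summable_coe.2 hsum
    simpa using this
  have hsigma : (∑' s : Σ l : ℕ, { t : Finset (Fin (n + l)) // t.card = l },
      (‖p (n + s.1)‖ * ‖z‖ ^ s.1))
      = ∑' l : ℕ, (((n + l).choose l : ℝ) * (‖p (n + l)‖ * ‖z‖ ^ l)) := by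
    rw [Summable.tsum_sigma' (fun l => (hasSum_fintype _).summable) hsumR]
    congr 1
    funext l
    rw [tsum_fintype]
    simp [Finset.sum_const, Nat.card_eq_fintype_card, Fintype.card_finset_len]
  -- bound the series
  set x : ℝ := ‖z‖ / R with hx
  have hx0 : 0 ≤ x := by positivity
  have hx1 : x < 1 := (div_lt_one hRpos).2 hz
  have hxnorm : ‖x‖ < 1 := by rwa [Real.norm_eq_abs, abs_of_nonneg hx0]
  have hG : HasSum (fun l : ℕ => (A / (R:ℝ) ^ n) * (((l + n).choose n : ℝ) * x ^ l))
      ((A / (R:ℝ) ^ n) * (1 / (1 - x) ^ (n + 1))) :=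
    (hasSum_choose_mul_geometric_of_norm_lt_one n hxnorm).mul_left _
  have hle : ∀ l : ℕ, ((n + l).choose l : ℝ) * (‖p (n + l)‖ * ‖z‖ ^ l)
      ≤ (A / (R:ℝ) ^ n) * (((l + n).choose n : ℝ) * x ^ l) := by
    intro l
    have hc : ((n + l).choose l : ℝ) = ((l + n).choose n : ℝ) := by
      norm_cast
      rw [add_comm n l]
      exact Nat.choose_symm_add
    have hb : ‖p (n + l)‖ * ‖z‖ ^ l ≤ (A / (R:ℝ) ^ n) * x ^ l := by
      have h2 : ‖p (n + l)‖ * ‖z‖ ^ l ≤ (A / (R:ℝ) ^ (n + l)) * ‖z‖ ^ l :=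
        mul_le_mul_of_nonneg_right (hcoef (n + l)) (by positivity)
      refine h2.trans_eq ?_
      rw [hx, div_pow, pow_add]
      field_simp
    calc ((n + l).choose l : ℝ) * (‖p (n + l)‖ * ‖z‖ ^ l)
        ≤ ((n + l).choose l : ℝ) * ((A / (R:ℝ) ^ n) * x ^ l) :=
          mul_le_mul_of_nonneg_left hb (by positivity)
      _ = (A / (R:ℝ) ^ n) * (((l + n).choose n : ℝ) * x ^ l) := by rw [hc]; ring
  have hF : Summable fun l : ℕ => ((n + l).choose l : ℝ) * (‖p (n + l)‖ * ‖z‖ ^ l) :=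
    Summable.of_nonneg_of_le (fun l => by positivity) hle hG.summable
  have h2 : (∑' l : ℕ, (((n + l).choose l : ℝ) * (‖p (n + l)‖ * ‖z‖ ^ l)))
      ≤ (A / (R:ℝ) ^ n) * (1 / (1 - x) ^ (n + 1)) := by
    rw [← hG.tsum_eq]
    exact Summable.tsum_le_tsum hle hF hG.summable
  have hval : (A / (R:ℝ) ^ n) * (1 / (1 - x) ^ (n + 1)) = A * R / ((R:ℝ) - ‖z‖) ^ (n + 1) := by
    have h1x : 1 - x = ((R:ℝ) - ‖z‖) / R := by rw [hx]; field_simp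
    have hRz : (0:ℝ) < (R:ℝ) - ‖z‖ := by linarith
    have hR0 : (R:ℝ) ≠ 0 := hRpos.ne'
    have hRz0 : ((R:ℝ) - ‖z‖) ≠ 0 := hRz.ne'
    rw [h1x, div_pow, one_div_div, pow_succ (R:ℝ) n, div_mul_div_comm,
      show A * ((R:ℝ) ^ n * R) = (R:ℝ) ^ n * (A * R) by ring,
      mul_div_mul_left _ _ (pow_ne_zero n hR0)]
  have hq_le : ‖q n‖ ≤ A * R / ((R:ℝ) - ‖z‖) ^ (n + 1) := by
    rw [← hval]
    exact h1'.trans (by rw [hsigma]; exact h2)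
  rw [hnorm1]
  exact mul_le_mul_of_nonneg_left (happ.trans hq_le) (by positivity)

theorem stmt0 (f : ℂ → ℂ) (hf : Differentiable ℂ f) (C : ℝ) (hC : 0 < C)
    (hgrowth : ∀ r : ℝ, 0 < r → M1 f r ≤ C * Real.exp r / Real.sqrt r) :
    ∀ m : ℕ, ∃ K : ℝ, ∀ n : ℕ, 1 ≤ n → supD (iteratedDeriv n f) m ≤ K := by
  intro m
  refine ⟨C * Real.exp (m + 1) * Real.sqrt (m + 1), fun n hn => ?_⟩
  have hK0 : 0 ≤ C * Real.exp (m + 1) * Real.sqrt (m + 1) := by positivity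
  apply Real.sSup_le _ hK0
  rintro y ⟨z, hzball, rfl⟩
  have hzm : ‖z‖ ≤ (m:ℝ) := by
    rwa [mem_closedBall, dist_zero_right] at hzball
  have hn1 : (1:ℝ) ≤ n := by exact_mod_cast hn
  have hnpos : (0:ℝ) < n := by linarith
  set R : ℝ≥0 := (n : ℝ≥0) + (m : ℝ≥0) with hRdef
  have hRval : (R : ℝ) = (n : ℝ) + (m : ℝ) := by simp [hRdef]
  have hRpos : 0 < R := by
    have : (0:ℝ) < (R:ℝ) := by rw [hRval]; positivity
    exact_mod_cast this
  have hz : ‖z‖ < (R:ℝ) := by rw [hRval]; linarith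
  have key := norm_iteratedDeriv_le f hf n R hRpos z hz
  -- bound each factor
  have hM1 : M1 f R ≤ C * Real.exp R / Real.sqrt R := hgrowth R (by exact_mod_cast hRpos)
  have hden : ((n:ℝ)) ^ (n + 1) ≤ ((R:ℝ) - ‖z‖) ^ (n + 1) := by
    apply pow_le_pow_left₀ hnpos.le
    rw [hRval]; linarith
  have hdenpos : (0:ℝ) < ((n:ℝ)) ^ (n + 1) := by positivity
  have hfrac : M1 f R * R / ((R:ℝ) - ‖z‖) ^ (n + 1)
      ≤ (C * Real.exp R / Real.sqrt R) * R / (n:ℝ) ^ (n + 1) := by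
    apply div_le_div₀ (by positivity)
      (mul_le_mul_of_nonneg_right hM1 (by positivity)) hdenpos hden
  have hstir := factorial_le_stirling n hn
  have hfacpos : (0:ℝ) < (Nat.factorial n : ℝ) := by exact_mod_cast Nat.factorial_pos n
  have step : ‖iteratedDeriv n f z‖
      ≤ (Real.exp 1 * Real.sqrt n * ((n:ℝ) / Real.exp 1) ^ n) *
        ((C * Real.exp R / Real.sqrt R) * R / (n:ℝ) ^ (n + 1)) := by
    refine key.trans ?_
    apply mul_le_mul hstir hfrac
      (div_nonneg (mul_nonneg (M1_nonneg f R) (by positivity))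
        (pow_nonneg (by linarith : (0:ℝ) ≤ (R:ℝ) - ‖z‖) _))
      (by positivity)
  refine step.trans ?_
  -- algebraic simplification
  have hexpR : Real.exp R = Real.exp 1 ^ n * Real.exp m := by
    rw [hRval, Real.exp_add, Real.exp_one_pow]
  have hsqrtn : (0:ℝ) < Real.sqrt n := Real.sqrt_pos.2 hnpos
  have hsqrtR : (0:ℝ) < Real.sqrt R := Real.sqrt_pos.2 (by rw [hRval]; positivity)
  have hRsq : (R:ℝ) = Real.sqrt R * Real.sqrt R := (Real.mul_self_sqrt (by positivity)).symm
  have hnsq : (n:ℝ) = Real.sqrt n * Real.sqrt n := (Real.mul_self_sqrt hnpos.le).symm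
  have heq : (Real.exp 1 * Real.sqrt n * ((n:ℝ) / Real.exp 1) ^ n) *
        ((C * Real.exp R / Real.sqrt R) * R / (n:ℝ) ^ (n + 1))
      = C * (Real.exp m * Real.exp 1) * (Real.sqrt R / Real.sqrt n) := by
    rw [hexpR, div_pow, pow_succ]
    rw [show ((n:ℝ)) ^ n * (n:ℝ) = (n:ℝ) ^ n * (Real.sqrt n * Real.sqrt n) by rw [← hnsq]]
    nth_rewrite 2 [hRsq]
    have hnn : ((n:ℝ)) ^ n ≠ 0 := by positivity
    have hen : Real.exp 1 ^ n ≠ 0 := by positivity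
    field_simp
  rw [heq]
  have hdiv : (R:ℝ) / (n:ℝ) ≤ (m:ℝ) + 1 := by
    rw [hRval, div_le_iff₀ hnpos]
    nlinarith
  have hsqrt_le : Real.sqrt R / Real.sqrt n ≤ Real.sqrt ((m:ℝ) + 1) := by
    rw [← Real.sqrt_div (by positivity : (0:ℝ) ≤ (R:ℝ))]
    exact Real.sqrt_le_sqrt hdiv
  rw [Real.exp_add]
  exact mul_le_mul_of_nonneg_left hsqrt_le (by positivity)
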